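/- For the Bateman Hamiltonian H_B = p_x p_y + ω² x y − γ(x p_x − y p_y), the functions H_ω = p_x p_y + ω² x y and H_γ = −γ(x p_x − y p_y) each Poisson-commute with H_B: {H_ω, H_B} = 0 and {H_γ, H_B} = 0. -/

import Mathlib

/-- Canonical Poisson bracket on ℝ⁴ in coordinates (x, y, p_x, p_y). -/
noncomputable def poissonBracketB (F G : ℝ → ℝ → ℝ → ℝ → ℝ) (x y px py : ℝ) : ℝ :=
  deriv (fun s => F s y px py) x * deriv (fun s => G x y s py) px
  - deriv (fun s => F x y s py) px * deriv (fun s => G s y px py) x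
  + deriv (fun s => F x s px py) y * deriv (fun s => G x y px s) py
  - deriv (fun s => F x y px s) py * deriv (fun s => G x s px py) y

lemma deriv_hmul (a t : ℝ) : deriv (HMul.hMul a) t = a := by
  simpa using (((hasDerivAt_id t).const_mul a).deriv)

/-- H_ω = p_xp_y + ω²xy and H_γ = −γ(xp_x − yp_y) both Poisson-commute with
the Bateman Hamiltonian H_B = H_ω + H_γ. -/
theorem bateman_first_integrals
    (γ ω : ℝ) (HB Hω Hγ : ℝ → ℝ → ℝ → ℝ → ℝ)
    (hHB : HB = fun x y px py => px * py + ω ^ 2 * x * y - γ * (x * px - y * py))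
    (hHω : Hω = fun x y px py => px * py + ω ^ 2 * x * y)
    (hHγ : Hγ = fun x y px py => -γ * (x * px - y * py)) :
    ∀ x y px py : ℝ,
      poissonBracketB Hω HB x y px py = 0 ∧ poissonBracketB Hγ HB x y px py = 0 := by
  subst hHB hHω hHγ
  intro x y px py
  constructor <;>
  · simp only [poissonBracketB]
    simp (disch := fun_prop) only [deriv_fun_sub, deriv_fun_add, deriv_fun_mul, deriv_const_mul,
      deriv_mul_const, deriv_id'', deriv_const', differentiableAt_fun_id,
      differentiableAt_const, deriv_hmul]
    ring
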